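/- Let ℓ, m, n ≥ 2. Define a sequence x₁, ..., x_{ℓmn} in ℤ/ℓ × ℤ/m × ℤ/n as in the paper's construction: group the indices into ℓmn/lcm(ℓ,m,n) blocks of length L = lcm(ℓ,m,n); within the k-th block, row r (0-indexed) is (s_k + (r, r, r)) where s_k is the block's seed; s₁ = (0,0,0), and s_{k} is obtained from the last row of block k−1 by adding (0,1,0) if k ≡ 1 (mod λ) with λ = n·lcm(ℓ,m)/lcm(ℓ,m,n), and by adding (0,0,1) otherwise, then resetting the first coordinate to 0 and subtracting the final diagonal shift appropriately so the seed has first coordinate 0. Then the sequence x₁, ..., x_{ℓmn} is a permutation of ℤ/ℓ × ℤ/m × ℤ/n (no repetitions). -/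

import Mathlib

lemma modEq_lcm {a b ℓ m : ℕ} (h1 : a ≡ b [MOD ℓ]) (h2 : a ≡ b [MOD m]) :
    a ≡ b [MOD Nat.lcm ℓ m] := by
  rw [Nat.modEq_iff_dvd] at h1 h2 ⊢
  have := _root_.lcm_dvd h1 h2
  simpa [← Int.coe_lcm, Int.lcm] using this

/-- The paper's ordering of the vertices of `K_ℓ □ K_m □ K_n` (0-indexed).
Index `h` lies in block `k = h / L` (`L = lcm(ℓ,m,n)`) at row `r = h % L`;
block `k` has seed `(0, b, b*(λ-1) + c)` where `b = k / λ`, `c = k % λ`, and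
`λ = n·lcm(ℓ,m)/lcm(ℓ,m,n)`; the row-`r` entry is the seed plus `(r,r,r)`. -/
def paperSeq (ℓ m n : ℕ) (h : ℕ) : ZMod ℓ × ZMod m × ZMod n :=
  let L := Nat.lcm (Nat.lcm ℓ m) n
  let lam := n * Nat.lcm ℓ m / L
  let r := h % L
  let k := h / L
  let b := k / lam
  let c := k % lam
  (((r : ℕ) : ZMod ℓ), ((b + r : ℕ) : ZMod m), ((b * (lam - 1) + c + r : ℕ) : ZMod n))

theorem paperSeq_bijective (ℓ m n : ℕ) (hl : 2 ≤ ℓ) (hm : 2 ≤ m) (hn : 2 ≤ n) :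
    Function.Bijective (fun h : Fin (ℓ * m * n) => paperSeq ℓ m n h.val) := by
  have hl0 : 0 < ℓ := by omega
  have hm0 : 0 < m := by omega
  have hn0 : 0 < n := by omega
  haveI : NeZero ℓ := ⟨by omega⟩
  haveI : NeZero m := ⟨by omega⟩
  haveI : NeZero n := ⟨by omega⟩
  have hMpos : 0 < Nat.lcm ℓ m := Nat.lcm_pos hl0 hm0
  have hLpos : 0 < Nat.lcm (Nat.lcm ℓ m) n := Nat.lcm_pos hMpos hn0
  have hlam : n * Nat.lcm ℓ m / Nat.lcm (Nat.lcm ℓ m) n = Nat.gcd (Nat.lcm ℓ m) n := by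
    have h1 : Nat.gcd (Nat.lcm ℓ m) n * Nat.lcm (Nat.lcm ℓ m) n = Nat.lcm ℓ m * n :=
      Nat.gcd_mul_lcm _ n
    have : n * Nat.lcm ℓ m = Nat.gcd (Nat.lcm ℓ m) n * Nat.lcm (Nat.lcm ℓ m) n := by
      rw [h1]; ring
    rw [this, Nat.mul_div_cancel _ hLpos]
  set M := Nat.lcm ℓ m with hM
  set L := Nat.lcm M n with hL
  set lam := Nat.gcd M n with hlamdef
  set g := Nat.gcd ℓ m with hg
  have hlampos : 0 < lam := Nat.gcd_pos_of_pos_left n hMpos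
  have hprod : ℓ * m * n = g * lam * L := by
    have h1 : g * M = ℓ * m := Nat.gcd_mul_lcm ℓ m
    have h2 : lam * L = M * n := Nat.gcd_mul_lcm M n
    calc ℓ * m * n = g * M * n := by rw [h1]
    _ = g * (lam * L) := by rw [h2]; ring
    _ = g * lam * L := by ring
  rw [Fintype.bijective_iff_injective_and_card]
  constructor
  · intro h₁ h₂ heq
    simp only [paperSeq, ← hM, ← hL, hlam, ← hlamdef, Prod.mk.injEq,
      ZMod.natCast_eq_natCast_iff] at heq
    obtain ⟨e1, e2, e3⟩ := heq
    have hc₁ : h₁.val / L % lam < lam := Nat.mod_lt _ hlampos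
    have hc₂ : h₂.val / L % lam < lam := Nat.mod_lt _ hlampos
    have hk₁ : h₁.val / L < g * lam := by
      apply Nat.div_lt_of_lt_mul
      exact lt_of_lt_of_eq h₁.isLt (by rw [hprod]; ring)
    have hk₂ : h₂.val / L < g * lam := by
      apply Nat.div_lt_of_lt_mul
      exact lt_of_lt_of_eq h₂.isLt (by rw [hprod]; ring)
    have hb₁ : h₁.val / L / lam < g := Nat.div_lt_of_lt_mul (hk₁.trans_eq (mul_comm g lam))
    have hb₂ : h₂.val / L / lam < g := Nat.div_lt_of_lt_mul (hk₂.trans_eq (mul_comm g lam))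
    have e1g : h₁.val % L ≡ h₂.val % L [MOD g] := e1.of_dvd (Nat.gcd_dvd_left ℓ m)
    have e2g : h₁.val / L / lam + h₁.val % L ≡ h₂.val / L / lam + h₂.val % L [MOD g] :=
      e2.of_dvd (Nat.gcd_dvd_right ℓ m)
    have hb : h₁.val / L / lam = h₂.val / L / lam := by
      have := e1g.add_right_cancel e2g
      rwa [Nat.ModEq, Nat.mod_eq_of_lt hb₁, Nat.mod_eq_of_lt hb₂] at this
    have e2m : h₁.val % L ≡ h₂.val % L [MOD m] := by
      rw [hb] at e2; exact Nat.ModEq.add_left_cancel' _ e2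
    have eM : h₁.val % L ≡ h₂.val % L [MOD M] := modEq_lcm e1 e2m
    have eMlam : h₁.val % L ≡ h₂.val % L [MOD lam] := eM.of_dvd (Nat.gcd_dvd_left M n)
    have e3' : h₁.val / L % lam + h₁.val % L ≡ h₂.val / L % lam + h₂.val % L [MOD n] := by
      rw [hb, add_assoc, add_assoc] at e3
      exact Nat.ModEq.add_left_cancel' _ e3
    have e3lam : h₁.val / L % lam + h₁.val % L ≡ h₂.val / L % lam + h₂.val % L [MOD lam] :=
      e3'.of_dvd (Nat.gcd_dvd_right M n)
    have hc : h₁.val / L % lam = h₂.val / L % lam := by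
      have := eMlam.add_right_cancel e3lam
      rwa [Nat.ModEq, Nat.mod_eq_of_lt hc₁, Nat.mod_eq_of_lt hc₂] at this
    have e3n : h₁.val % L ≡ h₂.val % L [MOD n] := by
      rw [hc] at e3'; exact Nat.ModEq.add_left_cancel' _ e3'
    have eL : h₁.val % L ≡ h₂.val % L [MOD L] := modEq_lcm eM e3n
    have hr : h₁.val % L = h₂.val % L := by
      rwa [Nat.ModEq, Nat.mod_mod_of_dvd _ dvd_rfl, Nat.mod_mod_of_dvd _ dvd_rfl] at eL
    have d1 := Nat.div_add_mod (h₁.val / L) lam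
    have d2 := Nat.div_add_mod (h₂.val / L) lam
    have d3 := Nat.div_add_mod h₁.val L
    have d4 := Nat.div_add_mod h₂.val L
    have hk : h₁.val / L = h₂.val / L := by rw [← d1, ← d2, hb, hc]
    exact Fin.ext (by rw [← d3, ← d4, hk, hr])
  · simp only [Fintype.card_prod, ZMod.card, Fintype.card_fin]; ring
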